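/- Let A, B, C, E, a, b, c, e be arbitrary real constants and consider the homogeneous quadratic web function f¹ = Ax¹y¹ + Bx¹y² + Cx²y¹ + Ex²y², f² = ax¹y¹ + bx¹y² + cx²y¹ + ex²y². Then: (i) det f̄ = (Ac − Ca)(y¹)² + (Be − Eb)(y²)² + (Ae + Bc − Cb − Ea)y¹y², and det f̃ = (Ab − Ba)(x¹)² + (Ce − Ec)(x²)² + (Ae − Bc + Cb − Ea)x¹x²; (ii) at every point where both of these determinants are nonzero, the connection coefficients are symmetric in their lower indices, Γ^i_{jk} = Γ^i_{kj} for all i,j,k ∈ {1,2} (i.e., the torsion tensor a^i_{jk} vanishes, so the web is isoclinicly geodesic). -/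

import Mathlib

noncomputable section

/-- Points of ℝ⁴ with coordinates (x¹, x², y¹, y²). -/
abbrev Pt : Type := ℝ × ℝ × ℝ × ℝ

/-- Partial derivative with respect to x^j (j = 0 ↦ x¹, j = 1 ↦ x²). -/
def pdx (j : Fin 2) (F : Pt → ℝ) (p : Pt) : ℝ :=
  if j = 0 then deriv (fun t => F (t, p.2.1, p.2.2.1, p.2.2.2)) p.1
  else deriv (fun t => F (p.1, t, p.2.2.1, p.2.2.2)) p.2.1

/-- Partial derivative with respect to y^k (k = 0 ↦ y¹, k = 1 ↦ y²). -/
def pdy (k : Fin 2) (F : Pt → ℝ) (p : Pt) : ℝ :=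
  if k = 0 then deriv (fun t => F (p.1, p.2.1, t, p.2.2.2)) p.2.2.1
  else deriv (fun t => F (p.1, p.2.1, p.2.2.1, t)) p.2.2.2

/-- Jacobian matrix f̄ with entries f̄^i_j = ∂f^i/∂x^j. -/
def fbar (f : Fin 2 → Pt → ℝ) (p : Pt) : Matrix (Fin 2) (Fin 2) ℝ :=
  Matrix.of fun i j => pdx j (f i) p

/-- Jacobian matrix f̃ with entries f̃^i_k = ∂f^i/∂y^k. -/
def ftil (f : Fin 2 → Pt → ℝ) (p : Pt) : Matrix (Fin 2) (Fin 2) ℝ :=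
  Matrix.of fun i k => pdy k (f i) p

/-- Connection coefficients Γ^i_{jk} = −Σ_{l,m} (∂²f^i/∂x^l∂y^m) ḡ^l_j g̃^m_k,
where ḡ = f̄⁻¹ and g̃ = f̃⁻¹. -/
def Gam (f : Fin 2 → Pt → ℝ) (i j k : Fin 2) (p : Pt) : ℝ :=
  - ∑ l : Fin 2, ∑ m : Fin 2,
      pdy m (pdx l (f i)) p * (fbar f p)⁻¹ l j * (ftil f p)⁻¹ m k

/-- Torsion tensor a^i_{jk} = (Γ^i_{jk} − Γ^i_{kj})/2. -/
def tors (f : Fin 2 → Pt → ℝ) (i j k : Fin 2) (p : Pt) : ℝ :=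
  (Gam f i j k p - Gam f i k j p) / 2

/-- The homogeneous quadratic web function. -/
def w (A B C E a b c e : ℝ) : Fin 2 → Pt → ℝ :=
  ![fun p => A * p.1 * p.2.2.1 + B * p.1 * p.2.2.2 + C * p.2.1 * p.2.2.1
      + E * p.2.1 * p.2.2.2,
    fun p => a * p.1 * p.2.2.1 + b * p.1 * p.2.2.2 + c * p.2.1 * p.2.2.1
      + e * p.2.1 * p.2.2.2]

lemma deriv_affine {F : ℝ → ℝ} (c d : ℝ) (h : ∀ t, F t = c * t + d) (x : ℝ) :
    deriv F x = c := by
  have hF : F = fun t => c * t + d := funext h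
  rw [hF]
  simpa using (((hasDerivAt_id x).const_mul c).add_const d).deriv

variable (A B C E a b c e : ℝ)

lemma pdx_w00 : pdx 0 (w A B C E a b c e 0)
    = fun p : Pt => A * p.2.2.1 + B * p.2.2.2 := by
  funext p
  simp only [pdx, if_pos rfl, w, Matrix.cons_val_zero]
  exact deriv_affine _ (C * p.2.1 * p.2.2.1 + E * p.2.1 * p.2.2.2) (fun t => by ring) _

lemma pdx_w01 : pdx 1 (w A B C E a b c e 0)
    = fun p : Pt => C * p.2.2.1 + E * p.2.2.2 := by
  funext p
  simp only [pdx, if_neg (by decide : (1 : Fin 2) ≠ 0), w, Matrix.cons_val_zero]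
  exact deriv_affine _ (A * p.1 * p.2.2.1 + B * p.1 * p.2.2.2) (fun t => by ring) _

lemma pdx_w10 : pdx 0 (w A B C E a b c e 1)
    = fun p : Pt => a * p.2.2.1 + b * p.2.2.2 := by
  funext p
  simp only [pdx, if_pos rfl, w, Matrix.cons_val_one, Matrix.head_cons, Matrix.cons_val_zero]
  exact deriv_affine _ (c * p.2.1 * p.2.2.1 + e * p.2.1 * p.2.2.2) (fun t => by ring) _

lemma pdx_w11 : pdx 1 (w A B C E a b c e 1)
    = fun p : Pt => c * p.2.2.1 + e * p.2.2.2 := by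
  funext p
  simp only [pdx, if_neg (by decide : (1 : Fin 2) ≠ 0), w, Matrix.cons_val_one,
    Matrix.head_cons, Matrix.cons_val_zero]
  exact deriv_affine _ (a * p.1 * p.2.2.1 + b * p.1 * p.2.2.2) (fun t => by ring) _

lemma pdy_w00 (p : Pt) : pdy 0 (w A B C E a b c e 0) p = A * p.1 + C * p.2.1 := by
  simp only [pdy, if_pos rfl, w, Matrix.cons_val_zero]
  exact deriv_affine _ (B * p.1 * p.2.2.2 + E * p.2.1 * p.2.2.2) (fun t => by ring) _

lemma pdy_w01 (p : Pt) : pdy 1 (w A B C E a b c e 0) p = B * p.1 + E * p.2.1 := by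
  simp only [pdy, if_neg (by decide : (1 : Fin 2) ≠ 0), w, Matrix.cons_val_zero]
  exact deriv_affine _ (A * p.1 * p.2.2.1 + C * p.2.1 * p.2.2.1) (fun t => by ring) _

lemma pdy_w10 (p : Pt) : pdy 0 (w A B C E a b c e 1) p = a * p.1 + c * p.2.1 := by
  simp only [pdy, if_pos rfl, w, Matrix.cons_val_one, Matrix.head_cons, Matrix.cons_val_zero]
  exact deriv_affine _ (b * p.1 * p.2.2.2 + e * p.2.1 * p.2.2.2) (fun t => by ring) _

lemma pdy_w11 (p : Pt) : pdy 1 (w A B C E a b c e 1) p = b * p.1 + e * p.2.1 := by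
  simp only [pdy, if_neg (by decide : (1 : Fin 2) ≠ 0), w, Matrix.cons_val_one,
    Matrix.head_cons, Matrix.cons_val_zero]
  exact deriv_affine _ (a * p.1 * p.2.2.1 + c * p.2.1 * p.2.2.1) (fun t => by ring) _

lemma pdyx00 (p : Pt) (m : Fin 2) :
    pdy m (pdx 0 (w A B C E a b c e 0)) p = if m = 0 then A else B := by
  rw [pdx_w00]
  fin_cases m
  · simp only [Fin.mk_zero, pdy, if_pos rfl, eq_self_iff_true, if_true]
    exact deriv_affine _ (B * p.2.2.2) (fun t => by ring) _
  · simp only [Fin.mk_one, pdy, if_neg (by decide : (1 : Fin 2) ≠ 0)]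
    exact deriv_affine _ (A * p.2.2.1) (fun t => by ring) _

lemma pdyx01 (p : Pt) (m : Fin 2) :
    pdy m (pdx 1 (w A B C E a b c e 0)) p = if m = 0 then C else E := by
  rw [pdx_w01]
  fin_cases m
  · simp only [Fin.mk_zero, pdy, if_pos rfl, eq_self_iff_true, if_true]
    exact deriv_affine _ (E * p.2.2.2) (fun t => by ring) _
  · simp only [Fin.mk_one, pdy, if_neg (by decide : (1 : Fin 2) ≠ 0)]
    exact deriv_affine _ (C * p.2.2.1) (fun t => by ring) _

lemma pdyx10 (p : Pt) (m : Fin 2) :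
    pdy m (pdx 0 (w A B C E a b c e 1)) p = if m = 0 then a else b := by
  rw [pdx_w10]
  fin_cases m
  · simp only [Fin.mk_zero, pdy, if_pos rfl, eq_self_iff_true, if_true]
    exact deriv_affine _ (b * p.2.2.2) (fun t => by ring) _
  · simp only [Fin.mk_one, pdy, if_neg (by decide : (1 : Fin 2) ≠ 0)]
    exact deriv_affine _ (a * p.2.2.1) (fun t => by ring) _

lemma pdyx11 (p : Pt) (m : Fin 2) :
    pdy m (pdx 1 (w A B C E a b c e 1)) p = if m = 0 then c else e := by
  rw [pdx_w11]
  fin_cases m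
  · simp only [Fin.mk_zero, pdy, if_pos rfl, eq_self_iff_true, if_true]
    exact deriv_affine _ (e * p.2.2.2) (fun t => by ring) _
  · simp only [Fin.mk_one, pdy, if_neg (by decide : (1 : Fin 2) ≠ 0)]
    exact deriv_affine _ (c * p.2.2.1) (fun t => by ring) _

lemma fbar_eq (x1 x2 y1 y2 : ℝ) :
    fbar (w A B C E a b c e) (x1, x2, y1, y2)
      = !![A * y1 + B * y2, C * y1 + E * y2; a * y1 + b * y2, c * y1 + e * y2] := by
  ext i j
  fin_cases i <;> fin_cases j <;>
    simp [fbar, pdx_w00, pdx_w01, pdx_w10, pdx_w11]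

lemma ftil_eq (x1 x2 y1 y2 : ℝ) :
    ftil (w A B C E a b c e) (x1, x2, y1, y2)
      = !![A * x1 + C * x2, B * x1 + E * x2; a * x1 + c * x2, b * x1 + e * x2] := by
  ext i j
  fin_cases i <;> fin_cases j <;>
    simp [ftil, pdy_w00, pdy_w01, pdy_w10, pdy_w11]

set_option maxHeartbeats 2000000 in
theorem stmt_13 (A B C E a b c e x1 x2 y1 y2 : ℝ) :
    (fbar (w A B C E a b c e) (x1, x2, y1, y2)).det
      = (A * c - C * a) * y1 ^ 2 + (B * e - E * b) * y2 ^ 2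
        + (A * e + B * c - C * b - E * a) * y1 * y2 ∧
    (ftil (w A B C E a b c e) (x1, x2, y1, y2)).det
      = (A * b - B * a) * x1 ^ 2 + (C * e - E * c) * x2 ^ 2
        + (A * e - B * c + C * b - E * a) * x1 * x2 ∧
    ((fbar (w A B C E a b c e) (x1, x2, y1, y2)).det ≠ 0 →
     (ftil (w A B C E a b c e) (x1, x2, y1, y2)).det ≠ 0 →
     ∀ i j k : Fin 2,
       Gam (w A B C E a b c e) i j k (x1, x2, y1, y2)
         = Gam (w A B C E a b c e) i k j (x1, x2, y1, y2)) := by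
  refine ⟨?_, ?_, ?_⟩
  · rw [fbar_eq, Matrix.det_fin_two_of]; ring
  · rw [ftil_eq, Matrix.det_fin_two_of]; ring
  · intro hd1 hd2 i j k
    rw [fbar_eq, Matrix.det_fin_two_of] at hd1
    rw [ftil_eq, Matrix.det_fin_two_of] at hd2
    fin_cases i <;> fin_cases j <;> fin_cases k <;>
      first
      | rfl
      | (simp only [Gam, Fin.sum_univ_two, Fin.mk_zero, Fin.mk_one, Fin.isValue,
          pdyx00, pdyx01, pdyx10, pdyx11,
          fbar_eq, ftil_eq, Matrix.inv_def, Matrix.adjugate_fin_two_of,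
          Ring.inverse_eq_inv', Matrix.det_fin_two_of, Matrix.smul_apply,
          Matrix.of_apply, Matrix.cons_val', Matrix.cons_val_zero, Matrix.cons_val_one,
          Matrix.head_cons, Matrix.empty_val', Matrix.cons_val_fin_one,
          Matrix.head_fin_const, smul_eq_mul, if_pos rfl, eq_self_iff_true, if_true,
          if_neg (by decide : (1 : Fin 2) ≠ 0)]
         field_simp
         ring)
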